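/- arXiv:1010.6013 — 3 statements merged into one kernel-verified Lean document; each statement's English description precedes it below -/
import Mathlib

section
/- Let a, b > 0 and define G = mes₂{(φ, ψ) ∈ (-π, π]² : a² sin²(φ/2) + b² sin²(ψ/2) ≤ 1}. Then min(2π, 2√2/a) · min(2π, 2√2/b) ≤ G ≤ min(2π, 2π/a) · min(2π, 2π/b). -/
open Real MeasureTheory

lemma cap_aux_lower {a x : ℝ} (ha : 0 < a) (hx : x ∈ Set.Ioc (-(min π (Real.sqrt 2 / a))) (min π (Real.sqrt 2 / a))) :
    x ∈ Set.Ioc (-π) π ∧ a ^ 2 * Real.sin (x / 2) ^ 2 ≤ 1 / 2 := by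
  have hs2 : (0:ℝ) < Real.sqrt 2 := by positivity
  have hc : (0:ℝ) < min π (Real.sqrt 2 / a) := lt_min pi_pos (by positivity)
  obtain ⟨h1, h2⟩ := hx
  constructor
  · exact ⟨lt_of_le_of_lt (by simp [min_le_left]) h1, h2.trans (min_le_left _ _)⟩
  · have hxa : x ≤ Real.sqrt 2 / a := h2.trans (min_le_right _ _)
    have hxa' : -(Real.sqrt 2 / a) ≤ x := by
      have := min_le_right π (Real.sqrt 2 / a); linarith
    have hx2 : x ^ 2 ≤ (Real.sqrt 2 / a) ^ 2 := sq_le_sq' hxa' hxa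
    have hsq : Real.sin (x / 2) ^ 2 ≤ (x / 2) ^ 2 := Real.sin_sq_le_sq
    have h2' : (Real.sqrt 2) ^ 2 = 2 := Real.sq_sqrt (by norm_num)
    have hx2' : x ^ 2 ≤ 2 / a ^ 2 := by
      rwa [div_pow, h2'] at hx2
    have : a ^ 2 * Real.sin (x / 2) ^ 2 ≤ a ^ 2 * ((2 / a ^ 2) / 4) := by
      have h4 : (x/2)^2 ≤ (2 / a^2)/4 := by nlinarith
      nlinarith [sq_nonneg a]
    calc a ^ 2 * Real.sin (x / 2) ^ 2 ≤ a ^ 2 * ((2 / a ^ 2) / 4) := this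
      _ = 1 / 2 := by field_simp; ring

lemma cap_aux_upper {a x : ℝ} (ha : 0 < a) (hmem : x ∈ Set.Ioc (-π) π)
    (h : a ^ 2 * Real.sin (x / 2) ^ 2 ≤ 1) :
    x ∈ Set.Icc (-(min π (π / a))) (min π (π / a)) := by
  obtain ⟨h1, h2⟩ := hmem
  have habs : |x / 2| ≤ π / 2 := by
    rw [abs_le]; constructor <;> [linarith; linarith]
  have hj : 2 / π * |x / 2| ≤ |Real.sin (x / 2)| := Real.mul_abs_le_abs_sin habs
  have hj' : |x| / π ≤ |Real.sin (x / 2)| := by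
    have : 2 / π * |x / 2| = |x| / π := by
      rw [abs_div]; rw [abs_of_pos (by norm_num : (0:ℝ) < 2)]
      field_simp
    linarith [this ▸ hj]
  have hsin : a * |Real.sin (x / 2)| ≤ 1 := by
    nlinarith [abs_nonneg (Real.sin (x/2)), sq_abs (Real.sin (x/2))]
  have hxpi : |x| ≤ π / a := by
    rw [le_div_iff₀ ha]
    have := mul_le_mul_of_nonneg_left hj' ha.le
    have hpi := pi_pos
    calc |x| * a = a * (|x| / π) * π := by field_simp
      _ ≤ a * |Real.sin (x / 2)| * π := by nlinarith [abs_nonneg x]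
      _ ≤ 1 * π := by nlinarith
      _ = π := one_mul π
  have : |x| ≤ min π (π / a) := le_min (abs_le.2 ⟨h1.le, h2⟩) hxpi
  exact abs_le.1 this

theorem cap_measure_min_bounds (a b : ℝ) (ha : 0 < a) (hb : 0 < b) :
    min (2 * π) (2 * Real.sqrt 2 / a) * min (2 * π) (2 * Real.sqrt 2 / b) ≤
      (volume {p : ℝ × ℝ | p.1 ∈ Set.Ioc (-π) π ∧ p.2 ∈ Set.Ioc (-π) π ∧
        a ^ 2 * Real.sin (p.1 / 2) ^ 2 + b ^ 2 * Real.sin (p.2 / 2) ^ 2 ≤ 1}).toReal ∧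
    (volume {p : ℝ × ℝ | p.1 ∈ Set.Ioc (-π) π ∧ p.2 ∈ Set.Ioc (-π) π ∧
        a ^ 2 * Real.sin (p.1 / 2) ^ 2 + b ^ 2 * Real.sin (p.2 / 2) ^ 2 ≤ 1}).toReal ≤
      min (2 * π) (2 * π / a) * min (2 * π) (2 * π / b) := by
  set S := {p : ℝ × ℝ | p.1 ∈ Set.Ioc (-π) π ∧ p.2 ∈ Set.Ioc (-π) π ∧
        a ^ 2 * Real.sin (p.1 / 2) ^ 2 + b ^ 2 * Real.sin (p.2 / 2) ^ 2 ≤ 1} with hS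
  set c1 := min π (Real.sqrt 2 / a) with hc1
  set d1 := min π (Real.sqrt 2 / b) with hd1
  set c2 := min π (π / a) with hc2
  set d2 := min π (π / b) with hd2
  have hc1pos : 0 < c1 := lt_min pi_pos (by positivity)
  have hd1pos : 0 < d1 := lt_min pi_pos (by positivity)
  have hc2pos : 0 < c2 := lt_min pi_pos (by positivity)
  have hd2pos : 0 < d2 := lt_min pi_pos (by positivity)
  have hsub1 : Set.Ioc (-c1) c1 ×ˢ Set.Ioc (-d1) d1 ⊆ S := by
    rintro ⟨x, y⟩ ⟨hx, hy⟩
    obtain ⟨hx1, hx2⟩ := cap_aux_lower ha hx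
    obtain ⟨hy1, hy2⟩ := cap_aux_lower hb hy
    exact ⟨hx1, hy1, by linarith⟩
  have hsub2 : S ⊆ Set.Icc (-c2) c2 ×ˢ Set.Icc (-d2) d2 := by
    rintro ⟨x, y⟩ ⟨hx, hy, hsum⟩
    have hb' : 0 ≤ b ^ 2 * Real.sin (y / 2) ^ 2 := by positivity
    have ha' : 0 ≤ a ^ 2 * Real.sin (x / 2) ^ 2 := by positivity
    exact ⟨cap_aux_upper ha hx (by linarith), cap_aux_upper hb hy (by linarith)⟩
  have hvol1 : volume (Set.Ioc (-c1) c1 ×ˢ Set.Ioc (-d1) d1) =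
      ENNReal.ofReal (2 * c1) * ENNReal.ofReal (2 * d1) := by
    rw [Measure.volume_eq_prod, Measure.prod_prod, Real.volume_Ioc, Real.volume_Ioc]
    congr 1 <;> congr 1 <;> ring
  have hvol2 : volume (Set.Icc (-c2) c2 ×ˢ Set.Icc (-d2) d2) =
      ENNReal.ofReal (2 * c2) * ENNReal.ofReal (2 * d2) := by
    rw [Measure.volume_eq_prod, Measure.prod_prod, Real.volume_Icc, Real.volume_Icc]
    congr 1 <;> congr 1 <;> ring
  have hfin : volume S ≠ ⊤ := by
    refine ne_top_of_le_ne_top ?_ (measure_mono hsub2)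
    rw [hvol2]
    exact ENNReal.mul_ne_top ENNReal.ofReal_ne_top ENNReal.ofReal_ne_top
  have hmin1 : min (2 * π) (2 * Real.sqrt 2 / a) = 2 * c1 := by
    rw [hc1, mul_div_assoc]
    exact (mul_min_of_nonneg _ _ (by norm_num : (0:ℝ) ≤ 2)).symm
  have hmin1' : min (2 * π) (2 * Real.sqrt 2 / b) = 2 * d1 := by
    rw [hd1, mul_div_assoc]
    exact (mul_min_of_nonneg _ _ (by norm_num : (0:ℝ) ≤ 2)).symm
  have hmin2 : min (2 * π) (2 * π / a) = 2 * c2 := by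
    rw [hc2, mul_div_assoc]
    exact (mul_min_of_nonneg _ _ (by norm_num : (0:ℝ) ≤ 2)).symm
  have hmin2' : min (2 * π) (2 * π / b) = 2 * d2 := by
    rw [hd2, mul_div_assoc]
    exact (mul_min_of_nonneg _ _ (by norm_num : (0:ℝ) ≤ 2)).symm
  constructor
  · rw [hmin1, hmin1']
    have h1 : volume (Set.Ioc (-c1) c1 ×ˢ Set.Ioc (-d1) d1) ≤ volume S := measure_mono hsub1
    have := ENNReal.toReal_mono hfin h1
    rw [hvol1, ENNReal.toReal_mul, ENNReal.toReal_ofReal (by positivity),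
      ENNReal.toReal_ofReal (by positivity)] at this
    exact this
  · rw [hmin2, hmin2']
    have h2 : volume S ≤ volume (Set.Icc (-c2) c2 ×ˢ Set.Icc (-d2) d2) := measure_mono hsub2
    have hfin2 : volume (Set.Icc (-c2) c2 ×ˢ Set.Icc (-d2) d2) ≠ ⊤ := by
      rw [hvol2]; exact ENNReal.mul_ne_top ENNReal.ofReal_ne_top ENNReal.ofReal_ne_top
    have := ENNReal.toReal_mono hfin2 h2
    rw [hvol2, ENNReal.toReal_mul, ENNReal.toReal_ofReal (by positivity),
      ENNReal.toReal_ofReal (by positivity)] at this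
    exact this
end

section
/- Let a, b ≥ 0 with a² + b² ≥ 2, and let G = mes₂{(φ, ψ) ∈ (-π, π]² : a² sin²(φ/2) + b² sin²(ψ/2) ≤ 1}. Then 8 ≤ (a+1)(b+1)G ≤ 16π². -/
set_option maxHeartbeats 800000


open Real MeasureTheory

theorem cap_measure_product_bounds (a b : ℝ) (ha : 0 ≤ a) (hb : 0 ≤ b)
    (hab : 2 ≤ a ^ 2 + b ^ 2) :
    8 ≤ (a + 1) * (b + 1) *
        (volume {p : ℝ × ℝ | p.1 ∈ Set.Ioc (-π) π ∧ p.2 ∈ Set.Ioc (-π) π ∧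
          a ^ 2 * Real.sin (p.1 / 2) ^ 2 + b ^ 2 * Real.sin (p.2 / 2) ^ 2 ≤ 1}).toReal ∧
    (a + 1) * (b + 1) *
        (volume {p : ℝ × ℝ | p.1 ∈ Set.Ioc (-π) π ∧ p.2 ∈ Set.Ioc (-π) π ∧
          a ^ 2 * Real.sin (p.1 / 2) ^ 2 + b ^ 2 * Real.sin (p.2 / 2) ^ 2 ≤ 1}).toReal ≤
      16 * π ^ 2 := by
  have hpi := Real.pi_pos
  have hs2 : (0:ℝ) < Real.sqrt 2 := Real.sqrt_pos.mpr (by norm_num)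
  have hs2sq : Real.sqrt 2 ^ 2 = 2 := Real.sq_sqrt (by norm_num)
  have hpi2 : Real.sqrt 2 ≤ π := by nlinarith [Real.pi_gt_three]
  set S : Set (ℝ × ℝ) := {p : ℝ × ℝ | p.1 ∈ Set.Ioc (-π) π ∧ p.2 ∈ Set.Ioc (-π) π ∧
          a ^ 2 * Real.sin (p.1 / 2) ^ 2 + b ^ 2 * Real.sin (p.2 / 2) ^ 2 ≤ 1} with hS
  set m : ℝ → ℝ := fun t => Real.sqrt 2 / max t (Real.sqrt 2 / π) with hm
  set M : ℝ → ℝ := fun t => π / max t 1 with hM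
  have hcpos : ∀ t, (0:ℝ) < max t (Real.sqrt 2 / π) := fun t =>
    lt_of_lt_of_le (by positivity) (le_max_right _ _)
  have hmpos : ∀ t, 0 < m t := fun t => div_pos hs2 (hcpos t)
  have hmle : ∀ t, m t ≤ π := fun t => by
    have h0 : (0:ℝ) < Real.sqrt 2 / π := by positivity
    calc m t ≤ Real.sqrt 2 / (Real.sqrt 2 / π) :=
          div_le_div_of_nonneg_left hs2.le h0 (le_max_right _ _)
      _ = π := by field_simp
  have hmul : ∀ t, 0 ≤ t → t * m t ≤ Real.sqrt 2 := fun t ht => by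
    rw [hm]
    simp only
    rw [mul_div_assoc', div_le_iff₀ (hcpos t)]
    nlinarith [le_max_left t (Real.sqrt 2 / π)]
  have hmub : ∀ t, 0 ≤ t → Real.sqrt 2 ≤ (t + 1) * m t := fun t ht => by
    have hc : max t (Real.sqrt 2 / π) ≤ t + 1 := by
      refine max_le (by linarith) ?_
      have : Real.sqrt 2 / π ≤ 1 := by
        rw [div_le_one hpi]; exact hpi2
      linarith
    rw [hm]
    simp only
    rw [mul_div_assoc', le_div_iff₀ (hcpos t)]
    nlinarith
  have hMpos : ∀ t, 0 < M t := fun t => div_pos hpi (lt_of_lt_of_le one_pos (le_max_right _ _))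
  have hMub : ∀ t, 0 ≤ t → (t + 1) * M t ≤ 2 * π := fun t ht => by
    have hc : (0:ℝ) < max t 1 := lt_of_lt_of_le one_pos (le_max_right _ _)
    rw [hM]
    simp only
    rw [mul_div_assoc', div_le_iff₀ hc]
    nlinarith [le_max_left t 1, le_max_right t 1]
  -- lower inclusion
  have hsub1 : Set.Ioc (-(m a)) (m a) ×ˢ Set.Ioc (-(m b)) (m b) ⊆ S := by
    rintro ⟨x, y⟩ ⟨hx, hy⟩
    simp only [Set.mem_Ioc] at hx hy
    have hxa : x ∈ Set.Ioc (-π) π :=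
      ⟨lt_of_le_of_lt (neg_le_neg (hmle a)) hx.1, hx.2.trans (hmle a)⟩
    have hyb : y ∈ Set.Ioc (-π) π :=
      ⟨lt_of_le_of_lt (neg_le_neg (hmle b)) hy.1, hy.2.trans (hmle b)⟩
    refine ⟨hxa, hyb, ?_⟩
    have h1 : Real.sin (x / 2) ^ 2 ≤ (x / 2) ^ 2 := Real.sin_sq_le_sq
    have h2 : Real.sin (y / 2) ^ 2 ≤ (y / 2) ^ 2 := Real.sin_sq_le_sq
    have hxm : x ^ 2 ≤ m a ^ 2 := sq_le_sq' hx.1.le hx.2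
    have hym : y ^ 2 ≤ m b ^ 2 := sq_le_sq' hy.1.le hy.2
    have hma : a ^ 2 * m a ^ 2 ≤ 2 := by
      nlinarith [hmul a ha, mul_nonneg ha (hmpos a).le]
    have hmb : b ^ 2 * m b ^ 2 ≤ 2 := by
      nlinarith [hmul b hb, mul_nonneg hb (hmpos b).le]
    nlinarith [sq_nonneg a, sq_nonneg b, mul_le_mul_of_nonneg_left h1 (sq_nonneg a),
      mul_le_mul_of_nonneg_left h2 (sq_nonneg b),
      mul_le_mul_of_nonneg_left hxm (sq_nonneg a),
      mul_le_mul_of_nonneg_left hym (sq_nonneg b)]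
  -- upper inclusion
  have key : ∀ t x : ℝ, 0 ≤ t → x ∈ Set.Ioc (-π) π → t ^ 2 * Real.sin (x / 2) ^ 2 ≤ 1 →
      |x| ≤ M t := by
    intro t x ht hx hsin
    rcases le_or_gt t 1 with h1 | h1
    · have : M t = π := by rw [hM]; simp [max_eq_right h1]
      rw [this, abs_le]
      exact ⟨hx.1.le, hx.2⟩
    · have hMt : M t = π / t := by rw [hM]; simp [max_eq_left h1.le]
      have habs : |x / 2| ≤ π / 2 := by
        rw [abs_le]; constructor <;> [linarith [hx.1.le]; linarith [hx.2]]
      have hj : 2 / π * |x / 2| ≤ |Real.sin (x / 2)| := Real.mul_abs_le_abs_sin habs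
      have hx2 : |x / 2| = |x| / 2 := by rw [abs_div]; norm_num
      have hineq : |x| / π ≤ |Real.sin (x / 2)| := by
        rw [hx2] at hj
        calc |x| / π = 2 / π * (|x| / 2) := by field_simp
          _ ≤ |Real.sin (x / 2)| := hj
      -- then t^2 * (|x|/π)^2 ≤ t^2 * sin^2 ≤ 1
      have hsq : (|x| / π) ^ 2 ≤ Real.sin (x / 2) ^ 2 := by
        rw [← sq_abs (Real.sin (x / 2))]
        exact pow_le_pow_left₀ (by positivity) hineq 2
      have h2 : t ^ 2 * (|x| / π) ^ 2 ≤ 1 :=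
        le_trans (mul_le_mul_of_nonneg_left hsq (sq_nonneg t)) hsin
      rw [hMt, le_div_iff₀ (by linarith : (0:ℝ) < t)]
      have h3 : (t * |x|) ^ 2 ≤ π ^ 2 := by
        have hp2 : (0:ℝ) < π ^ 2 := by positivity
        calc (t * |x|) ^ 2 = t ^ 2 * (|x| / π) ^ 2 * π ^ 2 := by rw [mul_pow, div_pow, sq_abs]; field_simp
          _ ≤ 1 * π ^ 2 := mul_le_mul_of_nonneg_right h2 hp2.le
          _ = π ^ 2 := one_mul _
      nlinarith [h3, sq_nonneg (t * |x| - π), hpi]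
  have hsub2 : S ⊆ Set.Icc (-(M a)) (M a) ×ˢ Set.Icc (-(M b)) (M b) := by
    rintro ⟨x, y⟩ ⟨hx, hy, hle⟩
    have hs1 : a ^ 2 * Real.sin (x / 2) ^ 2 ≤ 1 := by nlinarith [sq_nonneg (b * Real.sin (y/2)), sq_nonneg b, sq_nonneg (Real.sin (y/2)), mul_nonneg (sq_nonneg b) (sq_nonneg (Real.sin (y/2)))]
    have hs2' : b ^ 2 * Real.sin (y / 2) ^ 2 ≤ 1 := by nlinarith [mul_nonneg (sq_nonneg a) (sq_nonneg (Real.sin (x/2)))]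
    have h1 := key a x ha hx hs1
    have h2 := key b y hb hy hs2'
    rw [abs_le] at h1 h2
    exact ⟨⟨h1.1, h1.2⟩, ⟨h2.1, h2.2⟩⟩
  -- volume computations
  have hvol1 : volume (Set.Ioc (-(m a)) (m a) ×ˢ Set.Ioc (-(m b)) (m b)) =
      ENNReal.ofReal (2 * m a) * ENNReal.ofReal (2 * m b) := by
    rw [Measure.volume_eq_prod, Measure.prod_prod, Real.volume_Ioc, Real.volume_Ioc]
    congr 1 <;> congr 1 <;> ring
  have hvol2 : volume (Set.Icc (-(M a)) (M a) ×ˢ Set.Icc (-(M b)) (M b)) =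
      ENNReal.ofReal (2 * M a) * ENNReal.ofReal (2 * M b) := by
    rw [Measure.volume_eq_prod, Measure.prod_prod, Real.volume_Icc, Real.volume_Icc]
    congr 1 <;> congr 1 <;> ring
  have hfin : volume S ≠ ⊤ := by
    refine ne_top_of_le_ne_top ?_ (measure_mono hsub2)
    rw [hvol2]
    exact ENNReal.mul_ne_top ENNReal.ofReal_ne_top ENNReal.ofReal_ne_top
  have hGlow : 2 * m a * (2 * m b) ≤ (volume S).toReal := by
    have := measure_mono (μ := volume) hsub1
    rw [hvol1] at this
    have h' := ENNReal.toReal_mono hfin this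
    rwa [ENNReal.toReal_mul, ENNReal.toReal_ofReal (by positivity),
      ENNReal.toReal_ofReal (by positivity)] at h'
  have hGhigh : (volume S).toReal ≤ 2 * M a * (2 * M b) := by
    have := measure_mono (μ := volume) hsub2
    rw [hvol2] at this
    have h' := ENNReal.toReal_mono (by
      exact ENNReal.mul_ne_top ENNReal.ofReal_ne_top ENNReal.ofReal_ne_top) this
    rwa [ENNReal.toReal_mul, ENNReal.toReal_ofReal (by positivity),
      ENNReal.toReal_ofReal (by positivity)] at h'
  have hG0 : 0 ≤ (volume S).toReal := ENNReal.toReal_nonneg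
  constructor
  · have h1 := hmub a ha
    have h2 := hmub b hb
    have hab1 : (0:ℝ) ≤ a + 1 := by linarith
    have hab2 : (0:ℝ) ≤ b + 1 := by linarith
    calc (8:ℝ) = 4 * (Real.sqrt 2 * Real.sqrt 2) := by nlinarith
      _ ≤ 4 * (((a+1) * m a) * ((b+1) * m b)) := by
          nlinarith [mul_le_mul h1 h2 hs2.le (by nlinarith [hmpos a, hmpos b])]
      _ = (a + 1) * (b + 1) * (2 * m a * (2 * m b)) := by ring
      _ ≤ (a + 1) * (b + 1) * (volume S).toReal := by
          exact mul_le_mul_of_nonneg_left hGlow (by nlinarith)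
  · have h1 := hMub a ha
    have h2 := hMub b hb
    calc (a + 1) * (b + 1) * (volume S).toReal
        ≤ (a + 1) * (b + 1) * (2 * M a * (2 * M b)) := by
          exact mul_le_mul_of_nonneg_left hGhigh (by nlinarith)
      _ = 4 * (((a+1) * M a) * ((b+1) * M b)) := by ring
      _ ≤ 4 * ((2 * π) * (2 * π)) := by
          nlinarith [mul_le_mul h1 h2 (by nlinarith [hMpos b]) (by positivity)]
      _ = 16 * π ^ 2 := by ring
end

section
/- Let M : ℝ → ℝ be a nondecreasing function with M(t) = 0 for t ≤ 0, and suppose there exist constants γ₆, γ₇ > 0 such that γ₆ t³ |ln t| < M(t) < γ₇ t³ |ln t| for all 0 < t < 1/2, and M is bounded on [1/2, 2π²]. Then there exist positive constants c₁, c₂ such that for all sufficiently large λ, c₁ λ ln λ ≤ ∫₀^{2π²} λ⁴ e^{-λt} dM(t) ≤ c₂ λ ln λ, where the integral is a Riemann–Stieltjes integral. -/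
open Real MeasureTheory Filter

lemma myIntegrableOn_pow_mul_exp_neg (n : ℕ) {l : ℝ} (hl : 0 < l) :
    IntegrableOn (fun t : ℝ => t ^ n * Real.exp (-l * t)) (Set.Ioi 0) := by
  have h := integrableOn_rpow_mul_exp_neg_mul_rpow (s := (n : ℝ)) (p := 1) (b := l)
    (by linarith [Nat.cast_nonneg (α := ℝ) n]) zero_lt_one hl
  refine h.congr_fun (fun x hx => ?_) measurableSet_Ioi
  dsimp only
  rw [Real.rpow_one, Real.rpow_natCast]

lemma myIntegral_pow_mul_exp_neg (n : ℕ) {l : ℝ} (hl : 0 < l) :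
    ∫ t in Set.Ioi (0:ℝ), t ^ n * Real.exp (-l * t) = (Nat.factorial n : ℝ) / l ^ (n + 1) := by
  have h := integral_rpow_mul_exp_neg_mul_Ioi (a := (n : ℝ) + 1) (r := l)
    (by positivity) hl
  rw [show ((n : ℝ) + 1) - 1 = (n : ℝ) by ring] at h
  rw [Real.Gamma_nat_eq_factorial] at h
  rw [show (∫ t in Set.Ioi (0:ℝ), t ^ n * Real.exp (-l * t))
      = ∫ t in Set.Ioi (0:ℝ), t ^ (n : ℝ) * Real.exp (-(l * t)) from ?_, h]
  · rw [show ((n : ℝ) + 1) = ((n + 1 : ℕ) : ℝ) by push_cast; ring, Real.rpow_natCast,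
      one_div, inv_pow]
    field_simp
  · refine setIntegral_congr_fun measurableSet_Ioi (fun x hx => ?_)
    rw [Real.rpow_natCast, neg_mul]

/-- The Riemann–Stieltjes integral `∫₀^{2π²} λ⁴ e^{-λt} dM(t)` expressed via
integration by parts as `λ⁴ M(2π²) e^{-2λπ²} + λ⁵ ∫₀^{2π²} e^{-λt} M(t) dt`. -/
noncomputable def stieltjesExpIntegral (M : ℝ → ℝ) (l : ℝ) : ℝ :=
  l ^ 4 * M (2 * π ^ 2) * Real.exp (-2 * l * π ^ 2) +
    l ^ 5 * ∫ t in Set.Ioc (0 : ℝ) (2 * π ^ 2), Real.exp (-l * t) * M t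

set_option maxHeartbeats 1000000 in
theorem stieltjes_integral_asymptotics (M : ℝ → ℝ)
    (hmono : Monotone M) (hzero : ∀ t : ℝ, t ≤ 0 → M t = 0)
    (γ₆ γ₇ : ℝ) (hγ₆ : 0 < γ₆) (hγ₇ : 0 < γ₇)
    (hlow : ∀ t : ℝ, 0 < t → t < 1 / 2 → γ₆ * t ^ 3 * |Real.log t| < M t)
    (hupp : ∀ t : ℝ, 0 < t → t < 1 / 2 → M t < γ₇ * t ^ 3 * |Real.log t|)
    (hbdd : ∃ B : ℝ, ∀ t ∈ Set.Icc (1 / 2 : ℝ) (2 * π ^ 2), |M t| ≤ B) :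
    ∃ c₁ c₂ : ℝ, 0 < c₁ ∧ 0 < c₂ ∧ ∀ᶠ l : ℝ in atTop,
      c₁ * l * Real.log l ≤ stieltjesExpIntegral M l ∧
      stieltjesExpIntegral M l ≤ c₂ * l * Real.log l := by
  have hπ : (3:ℝ) < π := pi_gt_three
  have hT1 : (1:ℝ) ≤ 2 * π ^ 2 := by nlinarith
  have hMnn : ∀ t, 0 ≤ M t := by
    intro t
    rcases le_or_gt t 0 with h | h
    · rw [hzero t h]
    · rw [← hzero 0 le_rfl]; exact hmono h.le
  have hMT : 0 ≤ M (2 * π ^ 2) := hMnn _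
  set C : ℝ := M (2 * π ^ 2) * (2 * π ^ 2 + 1) with hC
  have hCnn : 0 ≤ C := by positivity
  have hIntM : ∀ l : ℝ, 0 < l → IntegrableOn (fun t => Real.exp (-l * t) * M t)
      (Set.Ioc 0 (2 * π ^ 2)) := by
    intro l hl
    apply Measure.integrableOn_of_bounded (M := M (2 * π ^ 2)) measure_Ioc_lt_top.ne
      (((measurable_id.const_mul (-l)).exp.mul hmono.measurable).aestronglyMeasurable)
    filter_upwards [ae_restrict_mem measurableSet_Ioc] with t ht
    show ‖Real.exp (-l * t) * M t‖ ≤ M (2 * π ^ 2)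
    rw [Real.norm_eq_abs, abs_of_nonneg (mul_nonneg (Real.exp_pos _).le (hMnn t))]
    calc Real.exp (-l * t) * M t ≤ 1 * M (2 * π ^ 2) := by
          apply mul_le_mul _ (hmono ht.2) (hMnn t) zero_le_one
          rw [Real.exp_le_one_iff]
          nlinarith [ht.1]
      _ = M (2 * π ^ 2) := one_mul _
  refine ⟨γ₆ * Real.exp (-2), 8 * γ₇ + 1, by positivity, by positivity, ?_⟩
  have hsm : ∀ᶠ l : ℝ in atTop, C * (l ^ (4:ℝ) * Real.exp (-(1/2) * l)) ≤ 1 := by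
    have h := (tendsto_rpow_mul_exp_neg_mul_atTop_nhds_zero 4 (1/2) (by norm_num)).const_mul C
    rw [mul_zero] at h
    exact h.eventually (eventually_le_nhds one_pos)
  filter_upwards [eventually_ge_atTop (3:ℝ), Real.tendsto_log_atTop.eventually_ge_atTop 1, hsm]
    with l hl3 hll hsml
  have hl0 : (0:ℝ) < l := by linarith
  have hlogl : (0:ℝ) ≤ Real.log l := by linarith
  have hsm' : C * (l ^ 4 * Real.exp (-(1/2) * l)) ≤ 1 := by
    rwa [show ((4:ℝ) = ((4:ℕ):ℝ)) by norm_num, Real.rpow_natCast] at hsml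
  set I : ℝ := ∫ t in Set.Ioc (0:ℝ) (2 * π ^ 2), Real.exp (-l * t) * M t with hI
  have hIntl := hIntM l hl0
  have hfnn : 0 ≤ᵐ[volume.restrict (Set.Ioc (0:ℝ) (2 * π ^ 2))]
      fun t => Real.exp (-l * t) * M t :=
    ae_of_all _ fun t => mul_nonneg (Real.exp_pos _).le (hMnn t)
  constructor
  · -- lower bound
    have hsub : Set.Ioc (1/l) (2/l) ⊆ Set.Ioc (0:ℝ) (2 * π ^ 2) := by
      apply Set.Ioc_subset_Ioc (by positivity)
      calc 2/l ≤ 1 := by rw [div_le_one hl0]; linarith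
        _ ≤ 2 * π ^ 2 := hT1
    have hMl : γ₆ * (1/l)^3 * Real.log l ≤ M (1/l) := by
      have h := hlow (1/l) (by positivity) (by rw [div_lt_div_iff₀ hl0 (by norm_num)]; linarith)
      have habs : |Real.log (1/l)| = Real.log l := by
        rw [one_div, Real.log_inv, abs_neg, abs_of_nonneg hlogl]
      rw [habs] at h
      exact h.le
    have hpt : ∀ t ∈ Set.Ioc (1/l) (2/l),
        Real.exp (-2) * M (1/l) ≤ Real.exp (-l * t) * M t := by
      intro t ht
      apply mul_le_mul _ (hmono ht.1.le) (hMnn _) (Real.exp_pos _).le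
      apply Real.exp_le_exp.2
      have h1 : l * t ≤ l * (2/l) := mul_le_mul_of_nonneg_left ht.2 hl0.le
      have h2 : l * (2/l) = 2 := by field_simp
      nlinarith
    have hge := setIntegral_ge_of_const_le (μ := volume) measurableSet_Ioc
      measure_Ioc_lt_top.ne hpt (hIntl.mono_set hsub)
    have hvol : volume.real (Set.Ioc (1/l) (2/l)) = 1/l := by
      rw [measureReal_def, Real.volume_Ioc, show (2:ℝ)/l - 1/l = 1/l by ring,
        ENNReal.toReal_ofReal (by positivity)]
    rw [hvol, smul_eq_mul, mul_comm (1/l)] at hge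
    have hmonoI : (∫ t in Set.Ioc (1/l) (2/l), Real.exp (-l * t) * M t) ≤ I :=
      setIntegral_mono_set hIntl hfnn hsub.eventuallyLE
    have hstep : Real.exp (-2) * M (1/l) * (1/l) ≤ I := le_trans hge hmonoI
    have hbdry : 0 ≤ l ^ 4 * M (2 * π ^ 2) * Real.exp (-2 * l * π ^ 2) :=
      mul_nonneg (mul_nonneg (by positivity) hMT) (Real.exp_pos _).le
    have hfin : γ₆ * Real.exp (-2) * l * Real.log l
        ≤ l ^ 5 * (Real.exp (-2) * M (1/l) * (1/l)) := by
      have h1 : γ₆ * Real.exp (-2) * l * Real.log l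
          = l ^ 5 * (Real.exp (-2) * (γ₆ * (1/l)^3 * Real.log l) * (1/l)) := by
        field_simp
      rw [h1]
      gcongr
    have : l ^ 5 * (Real.exp (-2) * M (1/l) * (1/l)) ≤ l ^ 5 * I := by gcongr
    unfold stieltjesExpIntegral
    rw [← hI]
    linarith
  · -- upper bound
    have hi3 : IntegrableOn (fun t : ℝ => t ^ 3 * Real.exp (-l * t))
        (Set.Ioc (0:ℝ) (2 * π ^ 2)) :=
      (myIntegrableOn_pow_mul_exp_neg 3 hl0).mono_set Set.Ioc_subset_Ioi_self
    have hi2 : IntegrableOn (fun t : ℝ => t ^ 2 * Real.exp (-l * t))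
        (Set.Ioc (0:ℝ) (2 * π ^ 2)) :=
      (myIntegrableOn_pow_mul_exp_neg 2 hl0).mono_set Set.Ioc_subset_Ioi_self
    have hpt : ∀ t ∈ Set.Ioc (0:ℝ) (2 * π ^ 2), Real.exp (-l * t) * M t
        ≤ γ₇ * Real.log l * (t ^ 3 * Real.exp (-l * t))
          + (γ₇ / l) * (t ^ 2 * Real.exp (-l * t))
          + M (2 * π ^ 2) * Real.exp (-(1/2) * l) := by
      intro t ht
      have htp := ht.1
      rcases lt_or_ge t (1/2) with h2 | h2
      · have hMt : M t ≤ γ₇ * Real.log l * t ^ 3 + (γ₇ / l) * t ^ 2 := by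
          have h := (hupp t htp h2).le
          have habs : |Real.log t| = -Real.log t :=
            abs_of_neg (Real.log_neg htp (by linarith))
          rw [habs] at h
          have hx : Real.log (1/(l*t)) ≤ 1/(l*t) - 1 :=
            Real.log_le_sub_one_of_pos (by positivity)
          rw [one_div, Real.log_inv, Real.log_mul (ne_of_gt hl0) (ne_of_gt htp)] at hx
          have h5 : -Real.log t ≤ Real.log l + (l*t)⁻¹ := by linarith
          calc M t ≤ γ₇ * t ^ 3 * (-Real.log t) := h
            _ ≤ γ₇ * t ^ 3 * (Real.log l + (l*t)⁻¹) :=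
              mul_le_mul_of_nonneg_left h5 (mul_nonneg hγ₇.le (pow_nonneg htp.le 3))
            _ = γ₇ * Real.log l * t ^ 3 + (γ₇ / l) * t ^ 2 := by
              rw [mul_inv]
              field_simp
        have h6 : Real.exp (-l * t) * M t
            ≤ Real.exp (-l * t) * (γ₇ * Real.log l * t ^ 3 + (γ₇ / l) * t ^ 2) :=
          mul_le_mul_of_nonneg_left hMt (Real.exp_pos _).le
        have h7 : Real.exp (-l * t) * (γ₇ * Real.log l * t ^ 3 + (γ₇ / l) * t ^ 2)
            = γ₇ * Real.log l * (t ^ 3 * Real.exp (-l * t))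
              + (γ₇ / l) * (t ^ 2 * Real.exp (-l * t)) := by ring
        have h8 : 0 ≤ M (2 * π ^ 2) * Real.exp (-(1/2) * l) :=
          mul_nonneg hMT (Real.exp_pos _).le
        linarith [h6, h7 ▸ h6]
      · have h6 : Real.exp (-l * t) * M t
            ≤ Real.exp (-(1/2) * l) * M (2 * π ^ 2) := by
          apply mul_le_mul _ (hmono ht.2) (hMnn _) (Real.exp_pos _).le
          apply Real.exp_le_exp.2
          nlinarith
        have h7 : 0 ≤ γ₇ * Real.log l * (t ^ 3 * Real.exp (-l * t)) :=
          mul_nonneg (mul_nonneg hγ₇.le hlogl)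
            (mul_nonneg (pow_nonneg htp.le 3) (Real.exp_pos _).le)
        have h8 : 0 ≤ (γ₇ / l) * (t ^ 2 * Real.exp (-l * t)) :=
          mul_nonneg (div_nonneg hγ₇.le hl0.le)
            (mul_nonneg (sq_nonneg t) (Real.exp_pos _).le)
        nlinarith [h6]
    have hconst : IntegrableOn (fun _ : ℝ => M (2 * π ^ 2) * Real.exp (-(1/2) * l))
        (Set.Ioc (0:ℝ) (2 * π ^ 2)) :=
      integrableOn_const measure_Ioc_lt_top.ne
    have hIle : I ≤ ∫ t in Set.Ioc (0:ℝ) (2 * π ^ 2),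
        (γ₇ * Real.log l * (t ^ 3 * Real.exp (-l * t))
          + (γ₇ / l) * (t ^ 2 * Real.exp (-l * t))
          + M (2 * π ^ 2) * Real.exp (-(1/2) * l)) :=
      setIntegral_mono_on hIntl
        (((hi3.const_mul _).add (hi2.const_mul _)).add hconst) measurableSet_Ioc hpt
    have h3le : (∫ t in Set.Ioc (0:ℝ) (2 * π ^ 2), t ^ 3 * Real.exp (-l * t)) ≤ 6 / l ^ 4 := by
      calc (∫ t in Set.Ioc (0:ℝ) (2 * π ^ 2), t ^ 3 * Real.exp (-l * t))
          ≤ ∫ t in Set.Ioi (0:ℝ), t ^ 3 * Real.exp (-l * t) :=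
            setIntegral_mono_set (myIntegrableOn_pow_mul_exp_neg 3 hl0)
              (by filter_upwards [ae_restrict_mem measurableSet_Ioi] with x hx
                  exact mul_nonneg (pow_nonneg hx.le 3) (Real.exp_pos _).le)
              Set.Ioc_subset_Ioi_self.eventuallyLE
        _ = 6 / l ^ 4 := by
            rw [myIntegral_pow_mul_exp_neg 3 hl0]; norm_num [Nat.factorial]
    have h2le : (∫ t in Set.Ioc (0:ℝ) (2 * π ^ 2), t ^ 2 * Real.exp (-l * t)) ≤ 2 / l ^ 3 := by
      calc (∫ t in Set.Ioc (0:ℝ) (2 * π ^ 2), t ^ 2 * Real.exp (-l * t))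
          ≤ ∫ t in Set.Ioi (0:ℝ), t ^ 2 * Real.exp (-l * t) :=
            setIntegral_mono_set (myIntegrableOn_pow_mul_exp_neg 2 hl0)
              (by filter_upwards [ae_restrict_mem measurableSet_Ioi] with x hx
                  exact mul_nonneg (pow_nonneg hx.le 2) (Real.exp_pos _).le)
              Set.Ioc_subset_Ioi_self.eventuallyLE
        _ = 2 / l ^ 3 := by
            rw [myIntegral_pow_mul_exp_neg 2 hl0]; norm_num [Nat.factorial]
    have hsplit : (∫ t in Set.Ioc (0:ℝ) (2 * π ^ 2),
        (γ₇ * Real.log l * (t ^ 3 * Real.exp (-l * t))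
          + (γ₇ / l) * (t ^ 2 * Real.exp (-l * t))
          + M (2 * π ^ 2) * Real.exp (-(1/2) * l)))
        = γ₇ * Real.log l * (∫ t in Set.Ioc (0:ℝ) (2 * π ^ 2), t ^ 3 * Real.exp (-l * t))
          + (γ₇ / l) * (∫ t in Set.Ioc (0:ℝ) (2 * π ^ 2), t ^ 2 * Real.exp (-l * t))
          + M (2 * π ^ 2) * Real.exp (-(1/2) * l) * (2 * π ^ 2) := by
      have hiA : IntegrableOn (fun t : ℝ => γ₇ * Real.log l * (t ^ 3 * Real.exp (-l * t))
          + (γ₇ / l) * (t ^ 2 * Real.exp (-l * t))) (Set.Ioc (0:ℝ) (2 * π ^ 2)) :=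
        (hi3.const_mul _).add (hi2.const_mul _)
      have hiB : IntegrableOn (fun t : ℝ => γ₇ * Real.log l * (t ^ 3 * Real.exp (-l * t)))
          (Set.Ioc (0:ℝ) (2 * π ^ 2)) := hi3.const_mul _
      have hiC : IntegrableOn (fun t : ℝ => (γ₇ / l) * (t ^ 2 * Real.exp (-l * t)))
          (Set.Ioc (0:ℝ) (2 * π ^ 2)) := hi2.const_mul _
      rw [integral_add hiA hconst, integral_add hiB hiC,
        integral_const_mul, integral_const_mul, setIntegral_const, smul_eq_mul,
        measureReal_def, Real.volume_Ioc, sub_zero, ENNReal.toReal_ofReal (by positivity)]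
      ring
    have hIbound : I ≤ γ₇ * Real.log l * (6 / l ^ 4) + (γ₇ / l) * (2 / l ^ 3)
        + M (2 * π ^ 2) * Real.exp (-(1/2) * l) * (2 * π ^ 2) := by
      rw [hsplit] at hIle
      have hb1 : γ₇ * Real.log l
          * (∫ t in Set.Ioc (0:ℝ) (2 * π ^ 2), t ^ 3 * Real.exp (-l * t))
          ≤ γ₇ * Real.log l * (6 / l ^ 4) :=
        mul_le_mul_of_nonneg_left h3le (by positivity)
      have hb2 : (γ₇ / l) * (∫ t in Set.Ioc (0:ℝ) (2 * π ^ 2), t ^ 2 * Real.exp (-l * t))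
          ≤ (γ₇ / l) * (2 / l ^ 3) :=
        mul_le_mul_of_nonneg_left h2le (by positivity)
      linarith
    -- combine
    have hbdry : l ^ 4 * M (2 * π ^ 2) * Real.exp (-2 * l * π ^ 2)
        ≤ l ^ 4 * M (2 * π ^ 2) * Real.exp (-(1/2) * l) := by
      apply mul_le_mul_of_nonneg_left _ (by positivity)
      apply Real.exp_le_exp.2
      nlinarith
    have hmain : l ^ 5 * I ≤ 6 * γ₇ * l * Real.log l + 2 * γ₇ * l
        + M (2 * π ^ 2) * (2 * π ^ 2) * (l ^ 5 * Real.exp (-(1/2) * l)) := by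
      have h1 := mul_le_mul_of_nonneg_left hIbound (by positivity : (0:ℝ) ≤ l ^ 5)
      have e0 : l ^ 5 * (γ₇ * Real.log l * (6 / l ^ 4) + (γ₇ / l) * (2 / l ^ 3)
          + M (2 * π ^ 2) * Real.exp (-(1/2) * l) * (2 * π ^ 2))
          = l ^ 5 * (γ₇ * Real.log l * (6 / l ^ 4)) + l ^ 5 * ((γ₇ / l) * (2 / l ^ 3))
          + M (2 * π ^ 2) * (2 * π ^ 2) * (l ^ 5 * Real.exp (-(1/2) * l)) := by ring
      have e1 : l ^ 5 * (γ₇ * Real.log l * (6 / l ^ 4)) = 6 * γ₇ * l * Real.log l := by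
        field_simp
      have e2 : l ^ 5 * ((γ₇ / l) * (2 / l ^ 3)) = 2 * γ₇ * l := by
        field_simp
      rw [e0, e1, e2] at h1
      exact h1
    have htail : M (2 * π ^ 2) * (2 * π ^ 2) * (l ^ 5 * Real.exp (-(1/2) * l))
        + l ^ 4 * M (2 * π ^ 2) * Real.exp (-(1/2) * l) ≤ l := by
      have hl4 : l ^ 4 ≤ l ^ 5 := pow_le_pow_right₀ (by linarith) (by norm_num)
      have hET : 0 ≤ M (2 * π ^ 2) * Real.exp (-(1/2) * l) :=
        mul_nonneg hMT (Real.exp_pos _).le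
      have h45 : l ^ 4 * (M (2 * π ^ 2) * Real.exp (-(1/2) * l))
          ≤ l ^ 5 * (M (2 * π ^ 2) * Real.exp (-(1/2) * l)) :=
        mul_le_mul_of_nonneg_right hl4 hET
      have h1 : M (2 * π ^ 2) * (2 * π ^ 2) * (l ^ 5 * Real.exp (-(1/2) * l))
          + l ^ 4 * M (2 * π ^ 2) * Real.exp (-(1/2) * l)
          ≤ l * (C * (l ^ 4 * Real.exp (-(1/2) * l))) := by
        have he : l * (C * (l ^ 4 * Real.exp (-(1/2) * l)))
            = M (2 * π ^ 2) * (2 * π ^ 2) * (l ^ 5 * Real.exp (-(1/2) * l))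
              + l ^ 5 * (M (2 * π ^ 2) * Real.exp (-(1/2) * l)) := by
          rw [hC]; ring
        rw [he]
        linarith [h45]
      calc _ ≤ l * (C * (l ^ 4 * Real.exp (-(1/2) * l))) := h1
        _ ≤ l * 1 := mul_le_mul_of_nonneg_left hsm' hl0.le
        _ = l := mul_one l
    have hL : l ≤ l * Real.log l := le_mul_of_one_le_right hl0.le hll
    have h2g : 2 * γ₇ * l ≤ 2 * γ₇ * (l * Real.log l) :=
      mul_le_mul_of_nonneg_left hL (by positivity)
    unfold stieltjesExpIntegral
    rw [← hI]
    linarith [hmain, hbdry, htail, h2g, hL]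
end
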